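/- Let r_s > 0 and let Ω be an open subset of EuclideanSpace ℝ (Fin 3) such that ‖x‖ > r_s/4 for every x ∈ Ω. Let φ, ψ : EuclideanSpace ℝ (Fin 3) → ℝ be twice continuously differentiable on Ω, let ℓ : ℝ → ℝ be continuously differentiable, define G : EuclideanSpace ℝ (Fin 3) → ℝ by G(x) := −2·ℓ(‖∇φ(x)‖²), and assume G(x) ≠ 0 and ∇ψ(x) = G(x)·∇φ(x) for all x ∈ Ω. Define the radial coefficient c(r) := −(r_s/(4r²))·(3/(1 + r_s/(4r)) + 1/(1 − r_s/(4r))). Then for every x ∈ Ω the following are equivalent: (i) Δψ(x) + c(‖x‖)·⟨x/‖x‖, ∇ψ(x)⟩ = 0 (the source-free Maxwell electrostatic equation in the isotropic Schwarzschild background); (ii) Δφ(x) + c(‖x‖)·⟨x/‖x‖, ∇φ(x)⟩ + ⟨∇G(x), ∇φ(x)⟩/G(x) = 0 (the source-free electrostatic equation of the nonlinear electrodynamics with L_F = ℓ). -/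

import Mathlib

open RealInnerProductSpace

/-- The Laplacian of a real-valued function on `EuclideanSpace ℝ (Fin 3)`, as the trace
of its second derivative. -/
noncomputable def laplacian3 (f : EuclideanSpace ℝ (Fin 3) → ℝ)
    (x : EuclideanSpace ℝ (Fin 3)) : ℝ :=
  ∑ i : Fin 3,
    iteratedFDeriv ℝ 2 f x ![EuclideanSpace.single i 1, EuclideanSpace.single i 1]

lemma fderiv_apply_eq_inner_gradient (f : EuclideanSpace ℝ (Fin 3) → ℝ)
    (x v : EuclideanSpace ℝ (Fin 3)) : fderiv ℝ f x v = ⟪gradient f x, v⟫ := by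
  rw [gradient, InnerProductSpace.toDual_symm_apply]

/-- Theorem 1 of the paper (source-free form): in the Schwarzschild background written
in isotropic coordinates (radial coefficient
c(r) = −(r_s/(4r²))·(3/(1 + r_s/(4r)) + 1/(1 − r_s/(4r))), horizon at r = r_s/4), if
φ is the electrostatic potential of a nonlinear electrodynamics with L_F = ℓ,
G = −2ℓ(‖∇φ‖²), and ψ is a potential with ∇ψ = G·∇φ, then ψ satisfies the source-free
Maxwell electrostatic equation iff φ satisfies the source-free electrostatic equation
of the nonlinear theory. -/
theorem nled_schwarzschild_electrostatics (r_s : ℝ) (hrs : 0 < r_s)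
    (Ω : Set (EuclideanSpace ℝ (Fin 3))) (hΩ : IsOpen Ω)
    (hΩout : ∀ x ∈ Ω, r_s / 4 < ‖x‖)
    (φ ψ : EuclideanSpace ℝ (Fin 3) → ℝ)
    (hφ : ContDiffOn ℝ 2 φ Ω) (hψ : ContDiffOn ℝ 2 ψ Ω)
    (ℓ : ℝ → ℝ) (hℓ : ContDiff ℝ 1 ℓ)
    (G : EuclideanSpace ℝ (Fin 3) → ℝ)
    (hG : ∀ x, G x = -2 * ℓ (‖gradient φ x‖ ^ 2))
    (hGne : ∀ x ∈ Ω, G x ≠ 0)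
    (hDψ : ∀ x ∈ Ω, gradient ψ x = G x • gradient φ x)
    (c : ℝ → ℝ)
    (hc : ∀ r : ℝ, c r =
      -(r_s / (4 * r ^ 2)) * (3 / (1 + r_s / (4 * r)) + 1 / (1 - r_s / (4 * r)))) :
    ∀ x ∈ Ω,
      (laplacian3 ψ x + c ‖x‖ * ⟪‖x‖⁻¹ • x, gradient ψ x⟫ = 0 ↔
        laplacian3 φ x + c ‖x‖ * ⟪‖x‖⁻¹ • x, gradient φ x⟫ +
          ⟪gradient G x, gradient φ x⟫ / G x = 0) := by
  intro x hx
  have hxmem : Ω ∈ nhds x := hΩ.mem_nhds hx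
  -- fderiv of ψ equals G • fderiv φ on Ω
  have hfψ : ∀ y ∈ Ω, fderiv ℝ ψ y = G y • fderiv ℝ φ y := by
    intro y hy
    have h := hDψ y hy
    have h2 := congrArg (InnerProductSpace.toDual ℝ (EuclideanSpace ℝ (Fin 3))) h
    simpa [gradient, map_smul] using h2
  -- regularity
  have hφ1 : ContDiffOn ℝ 1 (fderiv ℝ φ) Ω := hφ.fderiv_of_isOpen hΩ (by norm_num)
  have hdφ' : DifferentiableAt ℝ (fderiv ℝ φ) x :=
    ((hφ1.differentiableOn one_ne_zero).differentiableAt hxmem)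
  have hgradφ : ContDiffOn ℝ 1 (gradient φ) Ω := by
    have := ((InnerProductSpace.toDual ℝ
        (EuclideanSpace ℝ (Fin 3))).symm.contDiff (n := 1)).comp_contDiffOn hφ1
    exact this
  have hGc : ContDiffOn ℝ 1 G Ω := by
    have h1 : ContDiffOn ℝ 1 (fun y => -2 * ℓ (‖gradient φ y‖ ^ 2)) Ω :=
      contDiffOn_const.mul ((hℓ.comp (contDiff_norm_sq ℝ)).comp_contDiffOn hgradφ)
    exact h1.congr (fun y _ => hG y)
  have hdG : DifferentiableAt ℝ G x :=
    ((hGc.differentiableOn one_ne_zero).differentiableAt hxmem)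
  -- second derivative of ψ
  have hev : fderiv ℝ ψ =ᶠ[nhds x] fun y => G y • fderiv ℝ φ y :=
    Filter.eventuallyEq_of_mem hxmem hfψ
  have h2ψ : fderiv ℝ (fderiv ℝ ψ) x
      = G x • fderiv ℝ (fderiv ℝ φ) x + (fderiv ℝ G x).smulRight (fderiv ℝ φ x) := by
    rw [hev.fderiv_eq, fderiv_fun_smul hdG hdφ']
  -- Laplacian relation
  have hlap : laplacian3 ψ x = G x * laplacian3 φ x + ⟪gradient G x, gradient φ x⟫ := by
    unfold laplacian3
    have hterm : ∀ i : Fin 3,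
        iteratedFDeriv ℝ 2 ψ x ![EuclideanSpace.single i 1, EuclideanSpace.single i 1]
          = G x * iteratedFDeriv ℝ 2 φ x
              ![EuclideanSpace.single i 1, EuclideanSpace.single i 1]
            + ⟪gradient G x, EuclideanSpace.single i 1⟫
              * ⟪EuclideanSpace.single i 1, gradient φ x⟫ := by
      intro i
      rw [iteratedFDeriv_two_apply, iteratedFDeriv_two_apply, h2ψ]
      simp only [Matrix.cons_val_zero, Matrix.cons_val_one, Matrix.head_cons,
        ContinuousLinearMap.add_apply, ContinuousLinearMap.coe_smul',
        Pi.smul_apply, ContinuousLinearMap.smulRight_apply, smul_eq_mul]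
      rw [fderiv_apply_eq_inner_gradient G, fderiv_apply_eq_inner_gradient φ,
        real_inner_comm (gradient φ x)]
    rw [Finset.sum_congr rfl (fun i _ => hterm i), Finset.sum_add_distrib, ← Finset.mul_sum]
    congr 1
    have hb := (EuclideanSpace.basisFun (Fin 3) ℝ).sum_inner_mul_inner
      (gradient G x) (gradient φ x)
    simpa [EuclideanSpace.basisFun_apply] using hb
  have hips : ⟪‖x‖⁻¹ • x, gradient ψ x⟫ = G x * ⟪‖x‖⁻¹ • x, gradient φ x⟫ := by
    rw [hDψ x hx, real_inner_smul_right]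
  have hGx := hGne x hx
  have key : laplacian3 ψ x + c ‖x‖ * ⟪‖x‖⁻¹ • x, gradient ψ x⟫
      = G x * (laplacian3 φ x + c ‖x‖ * ⟪‖x‖⁻¹ • x, gradient φ x⟫
          + ⟪gradient G x, gradient φ x⟫ / G x) := by
    rw [hlap, hips]
    field_simp
    ring
  rw [key, mul_eq_zero]
  simp [hGx]
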